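/- In ℤ^d, the number of sites at graph distance exactly n ≥ 1 from a finite set Λ is at most 2^d · C(n+d-1, d-1) · |∂Λ|, where C denotes the binomial coefficient. -/

import Mathlib

open scoped BigOperators
open Finset
open scoped Classical

abbrev Zd (d : ℕ) : Type := Fin d → ℤ

noncomputable def distTo {d : ℕ} (Λ : Finset (Zd d)) (x : Zd d) : ℕ :=
  sInf {n : ℕ | ∃ y ∈ Λ, (∑ i, (x i - y i).natAbs) = n}

noncomputable def bdry {d : ℕ} (Λ : Finset (Zd d)) : Finset (Zd d) :=
  Λ.filter fun x => ∃ i : Fin d, ∃ σ ∈ ({-1, 1} : Finset ℤ), x + Pi.single i σ ∉ Λ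

lemma int_eq_of_natAbs (a b : ℤ) (h1 : a.natAbs = b.natAbs)
    (h2 : decide (0 ≤ a) = decide (0 ≤ b)) : a = b := by
  by_cases ha : 0 ≤ a <;> by_cases hb : 0 ≤ b <;> simp [ha, hb] at h2 ⊢ <;> omega

lemma count_sum_replicate {d : ℕ} (a : Fin d → ℕ) (j : Fin d) :
    Multiset.count j (∑ i, Multiset.replicate (a i) i) = a j := by
  rw [Multiset.count_sum']
  simp [Multiset.count_replicate]

lemma card_sum_replicate {d : ℕ} (a : Fin d → ℕ) :
    Multiset.card (∑ i, Multiset.replicate (a i) i) = ∑ i, a i := by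
  classical
  induction (Finset.univ : Finset (Fin d)) using Finset.induction with
  | empty => simp
  | insert _ _ h ih => simp [Finset.sum_insert h, ih]

/-- If `distTo Λ x = n ≥ 1` then there is a boundary point at ℓ¹-distance exactly `n`. -/
lemma exists_bdry_pt {d : ℕ} (Λ : Finset (Zd d)) (hΛ : Λ.Nonempty) (x : Zd d) (n : ℕ)
    (hn : 1 ≤ n) (h : distTo Λ x = n) :
    ∃ y, y ∈ bdry Λ ∧ (∑ i, (x i - y i).natAbs) = n := by
  classical
  set S : Set ℕ := {m : ℕ | ∃ y ∈ Λ, (∑ i, (x i - y i).natAbs) = m} with hSdef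
  obtain ⟨y₀, hy₀⟩ := hΛ
  have hSne : S.Nonempty := ⟨_, y₀, hy₀, rfl⟩
  have hmem : sInf S ∈ S := Nat.sInf_mem hSne
  have hS : distTo Λ x = sInf S := rfl
  rw [hS] at h
  rw [h] at hmem
  obtain ⟨y, hyΛ, hsum⟩ := hmem
  have hex : ∃ i, x i ≠ y i := by
    by_contra hcon
    push_neg at hcon
    have : (∑ i, (x i - y i).natAbs) = 0 := by
      apply Finset.sum_eq_zero
      intro i _
      simp [hcon i]
    omega
  obtain ⟨i, hi⟩ := hex
  have hc : x i - y i ≠ 0 := sub_ne_zero.mpr hi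
  set σ : ℤ := if 0 < x i - y i then 1 else -1 with hσ
  set z : Zd d := y + Pi.single i σ with hz
  have hzval : ∀ j, z j = y j + (Pi.single i σ : Zd d) j := by
    intro j; rw [hz, Pi.add_apply]
  have hterm : ∀ j, j ≠ i → (x j - z j).natAbs = (x j - y j).natAbs := by
    intro j hj
    rw [hzval j, Pi.single_eq_of_ne hj]
    ring_nf
  have hterm_i : (x i - z i).natAbs + 1 = (x i - y i).natAbs := by
    rw [hzval i, Pi.single_eq_same]
    rcases lt_trichotomy (x i - y i) 0 with hlt | heq | hgt
    · have : σ = -1 := by rw [hσ]; simp [not_lt.mpr (le_of_lt hlt)]; omega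
      rw [this]; omega
    · exact absurd heq hc
    · have : σ = 1 := by rw [hσ]; simp [hgt]; omega
      rw [this]; omega
  have hsum' : (∑ j, (x j - z j).natAbs) + 1 = n := by
    have h1 : (∑ j, (x j - z j).natAbs)
        = (x i - z i).natAbs + ∑ j ∈ Finset.univ.erase i, (x j - z j).natAbs :=
      (Finset.add_sum_erase _ _ (Finset.mem_univ i)).symm
    have h2 : (∑ j, (x j - y j).natAbs)
        = (x i - y i).natAbs + ∑ j ∈ Finset.univ.erase i, (x j - y j).natAbs :=
      (Finset.add_sum_erase _ _ (Finset.mem_univ i)).symm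
    have h3 : ∑ j ∈ Finset.univ.erase i, (x j - z j).natAbs
        = ∑ j ∈ Finset.univ.erase i, (x j - y j).natAbs := by
      apply Finset.sum_congr rfl
      intro j hj
      exact hterm j (Finset.ne_of_mem_erase hj)
    omega
  have hznot : z ∉ Λ := by
    intro hzΛ
    have hle : sInf S ≤ n - 1 := Nat.sInf_le ⟨z, hzΛ, by omega⟩
    omega
  refine ⟨y, ?_, hsum⟩
  rw [bdry, Finset.mem_filter]
  refine ⟨hyΛ, i, σ, ?_, hznot⟩
  rw [hσ]
  by_cases h01 : 0 < x i - y i <;> simp [h01] <;> omega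

noncomputable def nearPt {d : ℕ} (Λ : Finset (Zd d)) (x : Zd d) : Zd d :=
  if h : ∃ y, y ∈ bdry Λ ∧ (∑ i, (x i - y i).natAbs) = distTo Λ x then h.choose
  else fun _ => 0

lemma nearPt_spec {d : ℕ} (Λ : Finset (Zd d)) (x : Zd d)
    (h : ∃ y, y ∈ bdry Λ ∧ (∑ i, (x i - y i).natAbs) = distTo Λ x) :
    nearPt Λ x ∈ bdry Λ ∧ (∑ i, (x i - nearPt Λ x i).natAbs) = distTo Λ x := by
  rw [nearPt, dif_pos h]
  exact h.choose_spec

/-- in ℤ^d, the number of sites at graph distance exactly n ≥ 1 from a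
finite set Λ is at most 2^d · C(n+d-1, d-1) · |∂Λ|. -/
theorem stmt15 {d : ℕ} (Λ : Finset (Zd d)) (hΛ : Λ.Nonempty) (n : ℕ) (hn : 1 ≤ n) :
    Set.ncard {x : Zd d | distTo Λ x = n}
      ≤ 2^d * (n + d - 1).choose (d - 1) * (bdry Λ).card := by
  classical
  rcases Nat.eq_zero_or_pos d with hd | hd
  · subst hd
    have hempty : {x : Zd 0 | distTo Λ x = n} = ∅ := by
      ext x
      simp only [Set.mem_setOf_eq, Set.mem_empty_iff_false, iff_false]
      obtain ⟨y₀, hy₀⟩ := hΛ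
      intro hx
      have h0 : distTo Λ x = 0 := by
        rw [distTo]
        exact Nat.sInf_eq_zero.mpr (Or.inl ⟨y₀, hy₀, by simp⟩)
      omega
    rw [hempty]
    simp
  -- main case d ≥ 1
  have hEx : ∀ x : {x : Zd d // distTo Λ x = n},
      ∃ y, y ∈ bdry Λ ∧ (∑ i, ((x : Zd d) i - y i).natAbs) = distTo Λ (x : Zd d) := by
    intro x
    obtain ⟨y, hy1, hy2⟩ := exists_bdry_pt Λ hΛ x.1 n hn x.2
    exact ⟨y, hy1, by rw [x.2]; exact hy2⟩
  set F : {x : Zd d // distTo Λ x = n} →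
      (↥(bdry Λ)) × (Fin d → Bool) × Sym (Fin d) n :=
    fun x =>
      (⟨nearPt Λ x.1, (nearPt_spec Λ x.1 (hEx x)).1⟩,
       fun i => decide (0 ≤ x.1 i - nearPt Λ x.1 i),
       ⟨∑ i, Multiset.replicate ((x.1 i - nearPt Λ x.1 i).natAbs) i, by
          rw [card_sum_replicate, (nearPt_spec Λ x.1 (hEx x)).2, x.2]⟩) with hF
  have hinj : Function.Injective F := by
    intro a b hab
    rw [hF] at hab
    have h1 := congrArg Prod.fst hab
    have h2 := congrArg (fun p => p.2.1) hab
    have h3 := congrArg (fun p => p.2.2) hab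
    simp only at h1 h2 h3
    have hy : nearPt Λ a.1 = nearPt Λ b.1 := congrArg Subtype.val h1
    have hcount : ∀ i, ((a.1 i - nearPt Λ a.1 i).natAbs)
        = ((b.1 i - nearPt Λ b.1 i).natAbs) := by
      intro i
      have := congrArg (fun s : Sym (Fin d) n => Multiset.count i (s : Multiset (Fin d))) h3
      simpa [count_sum_replicate] using this
    have hsign : ∀ i, decide (0 ≤ a.1 i - nearPt Λ a.1 i)
        = decide (0 ≤ b.1 i - nearPt Λ b.1 i) := fun i => congrFun h2 i
    apply Subtype.ext
    funext i
    have := int_eq_of_natAbs (a.1 i - nearPt Λ b.1 i) (b.1 i - nearPt Λ b.1 i)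
      (by rw [← hy]; exact hy ▸ hcount i) (by rw [← hy]; exact hy ▸ hsign i)
    omega
  have hcard : Nat.card {x : Zd d // distTo Λ x = n}
      ≤ Nat.card ((↥(bdry Λ)) × (Fin d → Bool) × Sym (Fin d) n) :=
    Nat.card_le_card_of_injective F hinj
  have hprod : Nat.card ((↥(bdry Λ)) × (Fin d → Bool) × Sym (Fin d) n)
      = (bdry Λ).card * (2^d * (d + n - 1).choose n) := by
    rw [Nat.card_prod, Nat.card_prod, Nat.card_eq_finsetCard,
      Nat.card_eq_fintype_card, Nat.card_eq_fintype_card,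
      Sym.card_sym_eq_choose]
    simp
  have hchoose : (d + n - 1).choose n = (n + d - 1).choose (d - 1) := by
    have h1 : d + n - 1 = n + d - 1 := by omega
    rw [h1]
    have h2 : n ≤ n + d - 1 := by omega
    have h4 := Nat.choose_symm h2
    rw [← h4]
    congr 1
    omega
  have hset : Set.ncard {x : Zd d | distTo Λ x = n}
      = Nat.card {x : Zd d // distTo Λ x = n} := rfl
  rw [hset]
  calc Nat.card {x : Zd d // distTo Λ x = n}
      ≤ (bdry Λ).card * (2^d * (d + n - 1).choose n) := hprod ▸ hcard
    _ = 2^d * (n + d - 1).choose (d - 1) * (bdry Λ).card := by rw [hchoose]; ring
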